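/- Under the hypotheses of the split inequality lemma (y ≤ aμ + (b/μ)x + c√x for all μ ∈ (0,1], with a,b > 0, c,x,y ≥ 0), the equivalent lower bound on x holds: x ≥ (2b + c·√(b/a))⁻¹·y if y > 2a + c·√(a/b), and x ≥ (2√(ab) + c)⁻²·y² if y ≤ 2a + c·√(a/b). -/

import Mathlib

theorem est_split_inverse (a b c x y : ℝ) (ha : 0 < a) (hb : 0 < b)
    (hc : 0 ≤ c) (hx : 0 ≤ x) (hy : 0 ≤ y)
    (h : ∀ μ : ℝ, 0 < μ → μ ≤ 1 → y ≤ a * μ + (b / μ) * x + c * Real.sqrt x) :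
    (y > 2 * a + c * Real.sqrt (a / b) → x ≥ (2 * b + c * Real.sqrt (b / a))⁻¹ * y) ∧
    (y ≤ 2 * a + c * Real.sqrt (a / b) → x ≥ ((2 * Real.sqrt (a * b) + c) ^ 2)⁻¹ * y ^ 2) := by
  have ht0 : 0 ≤ Real.sqrt x := Real.sqrt_nonneg x
  set t := Real.sqrt x with htdef
  have htt : t * t = x := Real.mul_self_sqrt hx
  have hsa0 : 0 < Real.sqrt a := Real.sqrt_pos.mpr ha
  have hsb0 : 0 < Real.sqrt b := Real.sqrt_pos.mpr hb
  have hsa : Real.sqrt a * Real.sqrt a = a := Real.mul_self_sqrt ha.le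
  have hsb : Real.sqrt b * Real.sqrt b = b := Real.mul_self_sqrt hb.le
  have hab : Real.sqrt (a * b) = Real.sqrt a * Real.sqrt b := Real.sqrt_mul ha.le b
  have habq : Real.sqrt (a / b) = Real.sqrt a / Real.sqrt b := Real.sqrt_div ha.le b
  have hbaq : Real.sqrt (b / a) = Real.sqrt b / Real.sqrt a := Real.sqrt_div hb.le a
  have hD0 : 0 < 2 * Real.sqrt (a * b) + c := by positivity
  -- key lemma: if 0 < x ≤ a/b then y ≤ (2√(ab)+c) * t
  have hkey : 0 < x → x ≤ a / b → y ≤ (2 * Real.sqrt (a * b) + c) * t := by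
    intro hx0 hxab
    have ht0' : 0 < t := Real.sqrt_pos.mpr hx0
    set μ := Real.sqrt b * t / Real.sqrt a with hμdef
    have hμ0 : 0 < μ := by positivity
    have hbxa : b * x ≤ a := by
      rw [le_div_iff₀ hb] at hxab; linarith [hxab, mul_comm x b]
    have hμ1 : μ ≤ 1 := by
      rw [hμdef, div_le_one hsa0]
      have h2 : Real.sqrt (b * x) ≤ Real.sqrt a := Real.sqrt_le_sqrt hbxa
      rwa [Real.sqrt_mul hb.le, ← htdef] at h2
    have hh := h μ hμ0 hμ1
    have e1 : a * μ = Real.sqrt a * Real.sqrt b * t := by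
      rw [hμdef]; field_simp
      linear_combination (-1 : ℝ) * hsa
    have e2 : (b / μ) * x = Real.sqrt a * Real.sqrt b * t := by
      rw [hμdef, div_div_eq_mul_div, div_mul_eq_mul_div, div_eq_iff (by positivity)]
      linear_combination (-(Real.sqrt a * (t * t))) * hsb - Real.sqrt a * b * htt
    rw [e1, e2] at hh
    rw [hab]; linarith
  have hDab : (2 * Real.sqrt (a * b) + c) * Real.sqrt (a / b)
      = 2 * a + c * Real.sqrt (a / b) := by
    rw [hab, habq]; field_simp
    linear_combination 2 * Real.sqrt b * hsa
  have hsab0 : 0 ≤ Real.sqrt (a / b) := Real.sqrt_nonneg _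
  constructor
  · intro hy1
    -- show x > a/b
    have hxab : a / b < x := by
      by_contra hcon
      push_neg at hcon
      rcases eq_or_lt_of_le hx with hx0 | hx0
      · have hh := h (1/2) (by norm_num) (by norm_num)
        have htz : t = 0 := by rw [htdef, ← hx0, Real.sqrt_zero]
        rw [htz, ← hx0] at hh
        have hcn : 0 ≤ c * Real.sqrt (a / b) := by positivity
        nlinarith
      · have hk := hkey hx0 hcon
        have htb : t ≤ Real.sqrt (a / b) := Real.sqrt_le_sqrt hcon
        nlinarith
    have hbx : a < b * x := by rw [div_lt_iff₀ hb] at hxab; linarith [mul_comm x b]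
    have hx0 : 0 < x := lt_trans (by positivity) hxab
    have ht0' : 0 < t := Real.sqrt_pos.mpr hx0
    have hta : Real.sqrt a < Real.sqrt b * t := by
      have h2 := Real.sqrt_lt_sqrt ha.le hbx
      rwa [Real.sqrt_mul hb.le, ← htdef] at h2
    have hct : c * t ≤ c * Real.sqrt (b / a) * x := by
      have hre : c * Real.sqrt (b / a) * x = c * Real.sqrt b * x / Real.sqrt a := by
        rw [hbaq]; ring
      rw [hre, le_div_iff₀ hsa0]
      have h3 : c * t * Real.sqrt a ≤ c * t * (Real.sqrt b * t) := by
        have := mul_le_mul_of_nonneg_left hta.le (mul_nonneg hc ht0'.le)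
        linarith [this]
      have h4 : c * t * (Real.sqrt b * t) = c * Real.sqrt b * x := by
        rw [← htt]; ring
      linarith
    have hh := h 1 one_pos le_rfl
    have hyx : y ≤ (2 * b + c * Real.sqrt (b / a)) * x := by nlinarith
    have hE0 : 0 < 2 * b + c * Real.sqrt (b / a) := by positivity
    rw [ge_iff_le, inv_mul_le_iff₀ hE0]
    exact hyx
  · intro hy2
    have hD2 : (0:ℝ) < (2 * Real.sqrt (a * b) + c) ^ 2 := by positivity
    rw [ge_iff_le, inv_mul_le_iff₀ hD2]
    rcases eq_or_lt_of_le hx with hx0 | hx0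
    · -- x = 0 : show y = 0
      have hy0 : y ≤ 0 := by
        by_contra hycon
        push_neg at hycon
        have hμ0 : 0 < min 1 (y / (2 * a)) := lt_min one_pos (div_pos hycon (by linarith))
        have hμ1 : min 1 (y / (2 * a)) ≤ 1 := min_le_left _ _
        have hh := h _ hμ0 hμ1
        have htz : t = 0 := by rw [htdef, ← hx0, Real.sqrt_zero]
        rw [htz, ← hx0] at hh
        simp only [mul_zero, add_zero] at hh
        have hmin : a * min 1 (y / (2 * a)) ≤ a * (y / (2 * a)) :=
          mul_le_mul_of_nonneg_left (min_le_right _ _) ha.le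
        have hya : a * (y / (2 * a)) = y / 2 := by field_simp
        linarith
      have hyz : y = 0 := le_antisymm hy0 hy
      rw [hyz]; nlinarith
    · rcases le_or_gt x (a / b) with hxab | hxab
      · have hk := hkey hx0 hxab
        have h1 : y * y ≤ ((2 * Real.sqrt (a * b) + c) * t) *
            ((2 * Real.sqrt (a * b) + c) * t) := mul_le_mul hk hk hy (by positivity)
        have h2 : ((2 * Real.sqrt (a * b) + c) * t) * ((2 * Real.sqrt (a * b) + c) * t)
            = (2 * Real.sqrt (a * b) + c) ^ 2 * x := by rw [← htt]; ring
        calc y ^ 2 = y * y := sq y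
          _ ≤ _ := h1
          _ = _ := h2
      · have hy' : y ≤ (2 * Real.sqrt (a * b) + c) * Real.sqrt (a / b) := by
          rw [hDab]; exact hy2
        have hsq : Real.sqrt (a / b) * Real.sqrt (a / b) = a / b :=
          Real.mul_self_sqrt (by positivity)
        have h1 : y * y ≤ ((2 * Real.sqrt (a * b) + c) * Real.sqrt (a / b)) *
            ((2 * Real.sqrt (a * b) + c) * Real.sqrt (a / b)) :=
          mul_le_mul hy' hy' hy (by positivity)
        have h2 : ((2 * Real.sqrt (a * b) + c) * Real.sqrt (a / b)) *
            ((2 * Real.sqrt (a * b) + c) * Real.sqrt (a / b))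
            = (2 * Real.sqrt (a * b) + c) ^ 2 * (a / b) := by
          linear_combination (2 * Real.sqrt (a * b) + c) ^ 2 * hsq
        have h3 : (2 * Real.sqrt (a * b) + c) ^ 2 * (a / b)
            ≤ (2 * Real.sqrt (a * b) + c) ^ 2 * x :=
          mul_le_mul_of_nonneg_left hxab.le (by positivity)
        calc y ^ 2 = y * y := sq y
          _ ≤ _ := h1
          _ = _ := h2
          _ ≤ _ := h3
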